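/- For any quiver Q, any weight θ ∈ ℤ^{Q0}, and any vectors l, u ∈ ℕ^{Q1}, there exist a quiver Q' containing no oriented cycles and a weight θ' ∈ ℤ^{Q'0} such that the flow polytope ∇(Q,θ,l,u) and the quiver polytope ∇(Q',θ') are integral-affinely equivalent. -/

import Mathlib

/-- The flow map of a quiver with arrow set `A`, vertex set `V`, source map `s`
and target map `t`. -/
def flowMap {V A : Type} [Fintype A] [DecidableEq V] (s t : A → V) (x : A → ℝ) (v : V) : ℝ :=
  (∑ a : A, if t a = v then x a else 0) - (∑ a : A, if s a = v then x a else 0)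

/-- The quiver polyhedron `∇(Q,θ)`. -/
def quiverPolyhedron {V A : Type} [Fintype A] [DecidableEq V] (s t : A → V) (θ : V → ℤ) :
    Set (A → ℝ) :=
  {x | (∀ a, 0 ≤ x a) ∧ ∀ v, flowMap s t x v = (θ v : ℝ)}

/-- A point of `ℝ^A` is a lattice point if all its coordinates are integers. -/
def IsLatticePt {A : Type} (x : A → ℝ) : Prop := ∀ a, ∃ z : ℤ, x a = (z : ℝ)

/-- Integral-affine equivalence of lattice polyhedra. -/
def IntegralAffinelyEquivalent {A B : Type}
    (P : Set (A → ℝ)) (Q : Set (B → ℝ)) : Prop :=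
  ∃ (φ : (A → ℝ) →ᵃ[ℝ] (B → ℝ)) (ψ : (B → ℝ) →ᵃ[ℝ] (A → ℝ)),
    (∀ x ∈ affineSpan ℝ P, ψ (φ x) = x) ∧
    (∀ y ∈ affineSpan ℝ Q, φ (ψ y) = y) ∧
    φ '' (affineSpan ℝ P : Set (A → ℝ)) = (affineSpan ℝ Q : Set (B → ℝ)) ∧
    φ '' ((affineSpan ℝ P : Set (A → ℝ)) ∩ {x | IsLatticePt x}) =
      (affineSpan ℝ Q : Set (B → ℝ)) ∩ {y | IsLatticePt y} ∧
    φ '' P = Q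

/-- The quiver has an oriented cycle. -/
def HasOrientedCycle {V A : Type} (s t : A → V) : Prop :=
  ∃ (n : ℕ) (f : Fin (n + 1) → A), ∀ i : Fin (n + 1), t (f i) = s (f (i + 1))

/-- The arrow `a` is removable for `(Q,θ)`. -/
def Removable {V A : Type} [Fintype A] [DecidableEq V] [DecidableEq A]
    (s t : A → V) (θ : V → ℤ) (a : A) : Prop :=
  IntegralAffinelyEquivalent (quiverPolyhedron s t θ)
    (quiverPolyhedron (fun b : {b : A // b ≠ a} => s b.1) (fun b => t b.1) θ)

/-- The non-loop arrow `a` is contractable for `(Q,θ)`. -/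
def Contractable {V A : Type} [Fintype A] [DecidableEq V] [DecidableEq A]
    (s t : A → V) (θ : V → ℤ) (a : A) (h : s a ≠ t a) : Prop :=
  IntegralAffinelyEquivalent (quiverPolyhedron s t θ)
    (quiverPolyhedron
      (fun b : {b : A // b ≠ a} =>
        if hb : s b.1 = s a then (⟨t a, Ne.symm h⟩ : {v : V // v ≠ s a}) else ⟨s b.1, hb⟩)
      (fun b : {b : A // b ≠ a} =>
        if hb : t b.1 = s a then (⟨t a, Ne.symm h⟩ : {v : V // v ≠ s a}) else ⟨t b.1, hb⟩)
      (fun v : {v : V // v ≠ s a} => if v.1 = t a then θ (s a) + θ (t a) else θ v.1))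

/-- The pair `(Q,θ)` is tight. -/
def Tight {V A : Type} [Fintype A] [DecidableEq V] [DecidableEq A]
    (s t : A → V) (θ : V → ℤ) : Prop :=
  (quiverPolyhedron s t θ).Nonempty ∧
  (∀ a : A, ¬ Removable s t θ a) ∧
  ∀ (a : A) (h : s a ≠ t a), ¬ Contractable s t θ a h

/-- The flow polytope `∇(Q,θ,l,u)`. -/
def flowPolytope {V A : Type} [Fintype A] [DecidableEq V] (s t : A → V) (θ : V → ℤ)
    (l u : A → ℕ) : Set (A → ℝ) :=
  {x | (∀ a, (l a : ℝ) ≤ x a ∧ x a ≤ (u a : ℝ)) ∧ ∀ v, flowMap s t x v = (θ v : ℝ)}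

set_option linter.unusedSectionVars false

section Aux
variable {V A : Type} [Fintype V] [Fintype A] [DecidableEq V] [DecidableEq A]
variable (s t : A → V) (θ : V → ℤ) (l u : A → ℕ)

def srcAux : A ⊕ A → V ⊕ A := Sum.elim (fun a => Sum.inl (s a)) (fun a => Sum.inl (t a))
def tgtAux : A ⊕ A → V ⊕ A := Sum.elim (fun a => Sum.inr a) (fun a => Sum.inr a)
def wtAux : V ⊕ A → ℤ :=
  Sum.elim (fun v => θ v + (∑ a, if s a = v then (l a : ℤ) else 0)
      - ∑ a, if t a = v then (u a : ℤ) else 0)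
    (fun a => (u a : ℤ) - (l a : ℤ))

noncomputable def phiAux : (A → ℝ) →ᵃ[ℝ] (A ⊕ A → ℝ) where
  toFun x := Sum.elim (fun a => x a - l a) (fun a => u a - x a)
  linear :=
    { toFun := fun x => Sum.elim (fun a => x a) (fun a => - x a)
      map_add' := by intro x y; funext b; cases b <;> simp <;> ring
      map_smul' := by intro c x; funext b; cases b <;> simp <;> ring }
  map_vadd' := by
    intro p v; funext b
    cases b <;> simp [vadd_eq_add] <;> ring

noncomputable def psiAux : (A ⊕ A → ℝ) →ᵃ[ℝ] (A → ℝ) where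
  toFun y := fun a => y (Sum.inl a) + l a
  linear :=
    { toFun := fun y => fun a => y (Sum.inl a)
      map_add' := by intro x y; funext a; simp
      map_smul' := by intro c x; funext a; simp }
  map_vadd' := by
    intro p v; funext a; simp [vadd_eq_add]; ring

lemma sum_ite_sub (c : A → Prop) [DecidablePred c] (f g : A → ℝ) :
    (∑ a, if c a then f a - g a else 0)
      = (∑ a, if c a then f a else 0) - ∑ a, if c a then g a else 0 := by
  rw [← Finset.sum_sub_distrib]
  exact Finset.sum_congr rfl (by intros; split <;> simp)

lemma sum_ite_add (c : A → Prop) [DecidablePred c] (f g : A → ℝ) :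
    (∑ a, if c a then f a + g a else 0)
      = (∑ a, if c a then f a else 0) + ∑ a, if c a then g a else 0 := by
  rw [← Finset.sum_add_distrib]
  exact Finset.sum_congr rfl (by intros; split <;> simp)

lemma phi_mem {x : A → ℝ} (hx : x ∈ flowPolytope s t θ l u) :
    phiAux l u x ∈ quiverPolyhedron (srcAux s t) tgtAux (wtAux s t θ l u) := by
  obtain ⟨hb, hf⟩ := hx
  constructor
  · intro b
    cases b with
    | inl a => simpa [phiAux] using (sub_nonneg.mpr (hb a).1)
    | inr a => simpa [phiAux] using (sub_nonneg.mpr (hb a).2)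
  · intro v'
    cases v' with
    | inl v =>
      have hv := hf v
      simp only [flowMap] at hv ⊢
      simp only [phiAux, srcAux, tgtAux, Fintype.sum_sum_type, Sum.elim_inl, Sum.elim_inr,
        AffineMap.coe_mk, reduceCtorEq, if_false, Sum.inl.injEq, Finset.sum_const_zero,
        wtAux]
      rw [sum_ite_sub (fun a => s a = v) x (fun a => (l a : ℝ)),
          sum_ite_sub (fun a => t a = v) (fun a => (u a : ℝ)) x]
      push_cast
      push_cast at hv
      linarith
    | inr a0 =>
      simp only [flowMap, phiAux, srcAux, tgtAux, Fintype.sum_sum_type, Sum.elim_inl,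
        Sum.elim_inr, AffineMap.coe_mk, reduceCtorEq, if_false, Sum.inr.injEq,
        Finset.sum_const_zero, wtAux, Finset.sum_ite_eq', Finset.mem_univ, if_true]
      push_cast
      ring

lemma q_flow_inr {y : A ⊕ A → ℝ}
    (hy : y ∈ quiverPolyhedron (srcAux s t) tgtAux (wtAux s t θ l u)) (a : A) :
    y (Sum.inl a) + y (Sum.inr a) = (u a : ℝ) - (l a : ℝ) := by
  have h := hy.2 (Sum.inr a)
  simp only [flowMap, srcAux, tgtAux, Fintype.sum_sum_type, Sum.elim_inl, Sum.elim_inr,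
    reduceCtorEq, if_false, Sum.inr.injEq, Finset.sum_const_zero, wtAux,
    Finset.sum_ite_eq', Finset.mem_univ, if_true] at h
  push_cast at h
  linarith

lemma psi_mem {y : A ⊕ A → ℝ}
    (hy : y ∈ quiverPolyhedron (srcAux s t) tgtAux (wtAux s t θ l u)) :
    psiAux l y ∈ flowPolytope s t θ l u := by
  obtain ⟨hb, hf⟩ := hy
  constructor
  · intro a
    constructor
    · simpa [psiAux] using hb (Sum.inl a)
    · have := q_flow_inr s t θ l u ⟨hb, hf⟩ a
      have h2 := hb (Sum.inr a)
      simp only [psiAux, AffineMap.coe_mk]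
      linarith
  · intro v
    have hv := hf (Sum.inl v)
    simp only [flowMap, srcAux, tgtAux, Fintype.sum_sum_type, Sum.elim_inl, Sum.elim_inr,
      reduceCtorEq, if_false, Sum.inl.injEq, Finset.sum_const_zero, wtAux] at hv
    have hrw : (∑ a, if t a = v then y (Sum.inr a) else 0)
        = (∑ a, if t a = v then (u a : ℝ) else 0)
          - (∑ a, if t a = v then (l a : ℝ) else 0)
          - ∑ a, if t a = v then y (Sum.inl a) else 0 := by
      have : ∀ a, (if t a = v then y (Sum.inr a) else 0)
          = (if t a = v then ((u a : ℝ) - l a) - y (Sum.inl a) else 0) := by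
        intro a
        have := q_flow_inr s t θ l u ⟨hb, hf⟩ a
        split <;> [linarith; rfl]
      rw [Finset.sum_congr rfl (fun a _ => this a),
        sum_ite_sub (fun a => t a = v) (fun a => (u a : ℝ) - l a) (fun a => y (Sum.inl a)),
        sum_ite_sub (fun a => t a = v) (fun a => (u a : ℝ)) (fun a => (l a : ℝ))]
    rw [hrw] at hv
    push_cast at hv
    simp only [flowMap, psiAux, AffineMap.coe_mk]
    rw [sum_ite_add (fun a => t a = v) (fun a => y (Sum.inl a)) (fun a => (l a : ℝ)),
        sum_ite_add (fun a => s a = v) (fun a => y (Sum.inl a)) (fun a => (l a : ℝ))]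
    linarith

end Aux

set_option linter.unusedSectionVars false

section Aux2
variable {V A : Type} [Fintype V] [Fintype A] [DecidableEq V] [DecidableEq A]
variable (s t : A → V) (θ : V → ℤ) (l u : A → ℕ)

lemma psi_phi (x : A → ℝ) : psiAux l (phiAux l u x) = x := by
  funext a; simp [psiAux, phiAux]

lemma phi_psi {y : A ⊕ A → ℝ}
    (hy : ∀ a, y (Sum.inl a) + y (Sum.inr a) = (u a : ℝ) - l a) :
    phiAux l u (psiAux l y) = y := by
  funext b
  cases b with
  | inl a => simp [psiAux, phiAux]
  | inr a =>
    have := hy a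
    simp only [psiAux, phiAux, AffineMap.coe_mk, Sum.elim_inr]
    linarith

noncomputable def gAux : (A ⊕ A → ℝ) →ᵃ[ℝ] (A → ℝ) :=
  LinearMap.toAffineMap
    { toFun := fun y => fun a => y (Sum.inl a) + y (Sum.inr a)
      map_add' := by intro x y; funext a; simp; ring
      map_smul' := by intro c x; funext a; simp; ring }

lemma span_flow {y : A ⊕ A → ℝ}
    (hy : y ∈ affineSpan ℝ (quiverPolyhedron (srcAux s t) tgtAux (wtAux s t θ l u))) :
    ∀ a, y (Sum.inl a) + y (Sum.inr a) = (u a : ℝ) - l a := by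
  set c : A → ℝ := fun a => (u a : ℝ) - l a with hc
  have hle : affineSpan ℝ (quiverPolyhedron (srcAux s t) tgtAux (wtAux s t θ l u))
      ≤ AffineSubspace.comap (gAux (A := A)) (AffineSubspace.mk' c ⊥) := by
    rw [affineSpan_le]
    intro z hz
    rw [SetLike.mem_coe, AffineSubspace.mem_comap, AffineSubspace.mem_mk',
      Submodule.mem_bot, vsub_eq_sub, sub_eq_zero]
    funext a
    simpa [gAux, hc] using q_flow_inr s t θ l u hz a
  have h1 := hle hy
  rw [AffineSubspace.mem_comap, AffineSubspace.mem_mk',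
    Submodule.mem_bot, vsub_eq_sub, sub_eq_zero] at h1
  intro a
  have h2 := congrFun h1 a
  simpa [gAux, hc] using h2

lemma image_pq :
    (phiAux l u) '' (flowPolytope s t θ l u)
      = quiverPolyhedron (srcAux s t) tgtAux (wtAux s t θ l u) := by
  apply Set.Subset.antisymm
  · rintro _ ⟨x, hx, rfl⟩
    exact phi_mem s t θ l u hx
  · intro y hy
    exact ⟨psiAux l y, psi_mem s t θ l u hy,
      phi_psi l u (q_flow_inr s t θ l u hy)⟩

lemma no_cycle : ¬ HasOrientedCycle (srcAux s t) (tgtAux (A := A)) := by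
  rintro ⟨n, f, h⟩
  have := h 0
  cases hf : f 0 <;> cases hg : f (0 + 1) <;> rw [hf, hg] at this <;>
    simp [srcAux, tgtAux] at this

/-- every flow polytope is integral-affinely equivalent to the quiver
polytope of a quiver with no oriented cycles. -/
theorem stmt0 {V A : Type} [Fintype V] [Fintype A] [DecidableEq V] (s t : A → V)
    (θ : V → ℤ) (l u : A → ℕ) :
    ∃ (V' A' : Type) (iV : Fintype V') (iA : Fintype A') (dV : DecidableEq V')
      (s' t' : A' → V') (θ' : V' → ℤ),
      ¬ HasOrientedCycle s' t' ∧
      IntegralAffinelyEquivalent (flowPolytope s t θ l u)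
        (@quiverPolyhedron V' A' iA dV s' t' θ') := by
  haveI : DecidableEq A := Classical.decEq A
  refine ⟨V ⊕ A, A ⊕ A, inferInstance, inferInstance, inferInstance,
    srcAux s t, tgtAux, wtAux s t θ l u, no_cycle s t, ?_⟩
  set P := flowPolytope s t θ l u with hP
  set Q := quiverPolyhedron (srcAux s t) tgtAux (wtAux s t θ l u) with hQ
  have hPQ : (phiAux l u) '' P = Q := image_pq s t θ l u
  have hspan : (phiAux l u) '' (affineSpan ℝ P : Set (A → ℝ))
      = (affineSpan ℝ Q : Set (A ⊕ A → ℝ)) := by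
    rw [← AffineSubspace.coe_map, AffineSubspace.map_span, hPQ]
  refine ⟨phiAux l u, psiAux l, fun x _ => psi_phi l u x,
    fun y hy => phi_psi l u (span_flow s t θ l u hy), hspan, ?_, hPQ⟩
  apply Set.Subset.antisymm
  · rintro _ ⟨x, ⟨hx1, hx2⟩, rfl⟩
    refine ⟨hspan ▸ Set.mem_image_of_mem _ hx1, ?_⟩
    intro b
    cases b with
    | inl a =>
      obtain ⟨z, hz⟩ := hx2 a
      exact ⟨z - l a, by simp [phiAux, hz]⟩
    | inr a =>
      obtain ⟨z, hz⟩ := hx2 a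
      exact ⟨(u a : ℤ) - z, by simp [phiAux, hz]⟩
  · rintro y ⟨hy1, hy2⟩
    have hy1' : y ∈ affineSpan ℝ Q := hy1
    obtain ⟨x, hx, hxy⟩ : y ∈ (phiAux l u) '' (affineSpan ℝ P : Set (A → ℝ)) :=
      hspan ▸ hy1
    refine ⟨x, ⟨hx, ?_⟩, hxy⟩
    intro a
    obtain ⟨z, hz⟩ := hy2 (Sum.inl a)
    have : x = psiAux l y := by rw [← hxy, psi_phi]
    refine ⟨z + l a, ?_⟩
    rw [this]
    simp [psiAux, hz]
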